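/- Let C be a penalty function and suppose its unique non-decreasing argmax selection X of x ↦ x(v - x/2) - C(x) on [-1,1] satisfies: for every v ∈ [0,1], X(v) ∈ {0, v}. Let v₀ = sup{v : X(v) = 0}. Then C is constant equal to some value K on (v₀, 1], and v₀ = √(2K). -/

import Mathlib

open Set

/-- `C` is a penalty function. -/
def IsPenalty (C : ℝ → ℝ) : Prop :=
  (∀ x ∈ Set.Icc (-1 : ℝ) 1, 0 ≤ C x) ∧
  (∀ x ∈ Set.Icc (-1 : ℝ) 1, C (-x) = C x) ∧
  MonotoneOn C (Set.Icc 0 1) ∧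
  (∀ x ∈ Set.Icc (0 : ℝ) 1, ContinuousWithinAt C (Set.Ico 0 x) x) ∧
  C 0 = 0

/-- If the non-decreasing equilibrium demand takes only the values `0` or `v` on
`[0,1]`, then with `v₀ = sup{v : X v = 0}`, the penalty `C` equals a constant
`K` on `(v₀, 1]` and `v₀ = √(2K)`. -/
theorem stmt_9 (C : ℝ → ℝ) (hC : IsPenalty C)
    (X : ℝ → ℝ)
    (hXrange : ∀ v ∈ Set.Icc (0 : ℝ) 1, X v ∈ Set.Icc (-1 : ℝ) 1)
    (hXmax : ∀ v ∈ Set.Icc (0 : ℝ) 1, ∀ y ∈ Set.Icc (-1 : ℝ) 1,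
      y * (v - y / 2) - C y ≤ X v * (v - X v / 2) - C (X v))
    (hXmono : MonotoneOn X (Set.Icc 0 1))
    (hX01 : ∀ v ∈ Set.Icc (0 : ℝ) 1, X v = 0 ∨ X v = v) :
    ∃ K : ℝ,
      (∀ x ∈ Set.Ioc (sSup {v | v ∈ Set.Icc (0 : ℝ) 1 ∧ X v = 0}) (1 : ℝ),
        C x = K) ∧
      sSup {v | v ∈ Set.Icc (0 : ℝ) 1 ∧ X v = 0} = Real.sqrt (2 * K) := by
  obtain ⟨hCnn, hCsym, hCmono, hCcont, hC0⟩ := hC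
  set S := {v | v ∈ Set.Icc (0 : ℝ) 1 ∧ X v = 0} with hS
  have h0S : (0:ℝ) ∈ S := by
    refine ⟨⟨le_refl 0, zero_le_one⟩, ?_⟩
    rcases hX01 0 ⟨le_rfl, zero_le_one⟩ with h | h <;> simpa using h
  have hSbdd : BddAbove S := ⟨1, fun v hv => hv.1.2⟩
  set v₀ := sSup S with hv₀
  have hv₀0 : 0 ≤ v₀ := le_csSup hSbdd h0S
  have hv₀1 : v₀ ≤ 1 := csSup_le ⟨0, h0S⟩ (fun v hv => hv.1.2)
  have hXv : ∀ v, v₀ < v → v ≤ 1 → X v = v := by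
    intro v h1 h2
    have hv01 : v ∈ Set.Icc (0:ℝ) 1 := ⟨le_trans hv₀0 h1.le, h2⟩
    rcases hX01 v hv01 with h | h
    · exact absurd (le_csSup hSbdd ⟨hv01, h⟩) (not_le.mpr h1)
    · exact h
  -- key inequality
  have hkey : ∀ a b, v₀ < a → a ≤ 1 → v₀ < b → b ≤ 1 → C b - C a ≤ (b - a)^2 / 2 := by
    intro a b ha1 ha2 hb1 hb2
    have hXb := hXv b hb1 hb2
    have h0a : (0:ℝ) ≤ a := le_trans hv₀0 ha1.le
    have h0b : (0:ℝ) ≤ b := le_trans hv₀0 hb1.le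
    have h := hXmax b ⟨h0b, hb2⟩ a ⟨by linarith, ha2⟩
    rw [hXb] at h
    nlinarith [h]
  -- C v ≤ v²/2 for v ∈ (v₀,1]
  have hCle : ∀ v, v₀ < v → v ≤ 1 → C v ≤ v^2 / 2 := by
    intro v h1 h2
    have hXvv := hXv v h1 h2
    have h0v : (0:ℝ) ≤ v := le_trans hv₀0 h1.le
    have h := hXmax v ⟨h0v, h2⟩ 0 ⟨by norm_num, by norm_num⟩
    rw [hXvv] at h
    simp only [hC0] at h
    nlinarith [h]
  -- C v ≥ v²/2 for v ∈ S
  have hCge : ∀ v ∈ S, v^2 / 2 ≤ C v := by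
    intro v hv
    have h := hXmax v hv.1 v ⟨by linarith [hv.1.1], hv.1.2⟩
    rw [hv.2] at h
    simp only [hC0] at h
    nlinarith [h]
  -- constancy on (v₀,1]
  have hconst : ∀ u w, v₀ < u → u ≤ w → w ≤ 1 → C u = C w := by
    intro u w hu huw hw
    have h0u : (0:ℝ) ≤ u := le_trans hv₀0 hu.le
    have hle : C u ≤ C w := hCmono ⟨h0u, le_trans huw hw⟩ ⟨le_trans h0u huw, hw⟩ huw
    have hge : ∀ n : ℕ, 0 < n → C w - C u ≤ (w - u)^2 / (2 * n) := by
      intro n hn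
      have hnR : (0:ℝ) < n := by exact_mod_cast hn
      set f : ℕ → ℝ := fun i => u + i * ((w - u) / n) with hf
      have hfmem : ∀ i : ℕ, i ≤ n → v₀ < f i ∧ f i ≤ 1 := by
        intro i hi
        have hiR : (i:ℝ) ≤ n := by exact_mod_cast hi
        have hi0 : (0:ℝ) ≤ i := Nat.cast_nonneg i
        constructor
        · have : 0 ≤ (i:ℝ) * ((w - u) / n) :=
            mul_nonneg hi0 (div_nonneg (by linarith) hnR.le)
          simp only [hf]; linarith
        · have h1 : (i:ℝ) * ((w - u) / n) ≤ n * ((w - u) / n) := by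
            exact mul_le_mul_of_nonneg_right hiR (div_nonneg (by linarith) hnR.le)
          have h2 : (n:ℝ) * ((w - u) / n) = w - u := by field_simp
          simp only [hf]; linarith
      have htel : (Finset.range n).sum (fun i => C (f (i+1)) - C (f i)) = C (f n) - C (f 0) :=
        Finset.sum_range_sub (fun i => C (f i)) n
      have hf0 : f 0 = u := by simp [hf]
      have hfn : f n = w := by simp only [hf]; field_simp; ring
      have hterm : ∀ i ∈ Finset.range n, C (f (i+1)) - C (f i) ≤ ((w-u)/n)^2 / 2 := by
        intro i hi
        have hi' := Finset.mem_range.mp hi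
        obtain ⟨ha1, ha2⟩ := hfmem i (le_of_lt hi')
        obtain ⟨hb1, hb2⟩ := hfmem (i+1) hi'
        have hk := hkey (f i) (f (i+1)) ha1 ha2 hb1 hb2
        have hdiff : f (i+1) - f i = (w-u)/n := by
          simp only [hf, Nat.cast_add, Nat.cast_one]; ring
        rw [hdiff] at hk
        exact hk
      have hsum := Finset.sum_le_sum hterm
      rw [htel, hf0, hfn, Finset.sum_const, Finset.card_range, nsmul_eq_mul] at hsum
      calc C w - C u ≤ n * (((w-u)/n)^2 / 2) := hsum
        _ = (w - u)^2 / (2 * n) := by field_simp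
    have hfin : C w - C u ≤ 0 := by
      by_contra hpos
      push_neg at hpos
      obtain ⟨n, hn⟩ := exists_nat_gt ((w - u)^2 / (2 * (C w - C u)))
      have hn0 : 0 < n := by
        rcases Nat.eq_zero_or_pos n with h | h
        · exfalso
          rw [h] at hn
          simp only [Nat.cast_zero] at hn
          have : 0 ≤ (w - u)^2 / (2 * (C w - C u)) := by positivity
          linarith
        · exact h
      have h1 := hge n hn0
      have hnR : (0:ℝ) < n := by exact_mod_cast hn0
      have h2 : (w-u)^2 < n * (2 * (C w - C u)) := by
        have := (div_lt_iff₀ (by linarith : (0:ℝ) < 2 * (C w - C u))).mp hn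
        linarith
      have h3 : (w - u)^2 / (2 * n) < C w - C u := by
        rw [div_lt_iff₀ (by positivity)]
        nlinarith
      linarith
    linarith
  by_cases hcase : v₀ < 1
  · refine ⟨C 1, fun x hx => hconst x 1 hx.1 hx.2 le_rfl, ?_⟩
    set K := C 1 with hK
    have hK0 : 0 ≤ K := hCnn 1 ⟨by norm_num, le_rfl⟩
    have h2K : 0 ≤ 2 * K := by linarith
    -- K ≤ v₀²/2
    have hKle : K ≤ v₀^2 / 2 := by
      by_contra h
      push_neg at h
      have hsq : v₀ < Real.sqrt (2*K) := by
        rw [show v₀ = Real.sqrt (v₀^2) from (Real.sqrt_sq hv₀0).symm]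
        apply Real.sqrt_lt_sqrt (sq_nonneg _)
        linarith
      set v := min 1 ((v₀ + Real.sqrt (2*K)) / 2) with hv
      have hv1 : v ≤ 1 := min_le_left _ _
      have hvgt : v₀ < v := lt_min hcase (by linarith)
      have hv0 : 0 ≤ v := le_trans hv₀0 hvgt.le
      have hvlt : v < Real.sqrt (2*K) := lt_of_le_of_lt (min_le_right _ _) (by linarith)
      have hv2 : v^2 < 2*K := by
        have := Real.sq_sqrt h2K
        nlinarith [hvlt, Real.sqrt_nonneg (2*K)]
      have hCv : C v = K := hconst v 1 hvgt hv1 le_rfl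
      have := hCle v hvgt hv1
      rw [hCv] at this
      linarith
    -- v₀²/2 ≤ K
    have hKge : v₀^2 / 2 ≤ K := by
      by_contra h
      push_neg at h
      have hsq : Real.sqrt (2*K) < v₀ := by
        rw [show v₀ = Real.sqrt (v₀^2) from (Real.sqrt_sq hv₀0).symm]
        apply Real.sqrt_lt_sqrt h2K
        linarith
      obtain ⟨a, haS, ha⟩ := exists_lt_of_lt_csSup ⟨0, h0S⟩ hsq
      have ha0 : 0 ≤ a := haS.1.1
      have ha2 : 2*K < a^2 := by
        have := Real.sq_sqrt h2K
        nlinarith [Real.sqrt_nonneg (2*K)]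
      have hCa := hCge a haS
      have hCale : C a ≤ K := hCmono ⟨ha0, haS.1.2⟩ ⟨by norm_num, le_rfl⟩ haS.1.2
      linarith
    have hKeq : 2 * K = v₀^2 := by linarith
    rw [hKeq, Real.sqrt_sq hv₀0]
  · have hv1 : v₀ = 1 := le_antisymm hv₀1 (not_lt.mp hcase)
    refine ⟨1/2, ?_, ?_⟩
    · intro x hx
      rw [hv1] at hx
      exact absurd hx.1 (not_lt.mpr hx.2)
    · rw [hv1]
      norm_num
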